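/- arXiv:2505.02834 — 7 statements merged into one kernel-verified Lean document; each statement's English description precedes it below -/
import Mathlib

section
/- Let λ₁,…,λ_d ∈ [-1,1]. Then there exists a 2d×4d real matrix Q such that QQ^T = I_{2d} and Q · (⊕_{j=1}^{2d} J₂) · Q^T = ⊕_{j=1}^{d} [[0, λ_j], [-λ_j, 0]], where J₂ = [[0,1],[-1,0]]. -/
open Matrix

private lemma sumtwo {α : Type*} [Fintype α] [DecidableEq α] (f : α → ℝ) (a b : α)
    (hab : a ≠ b) (h : ∀ x, x ≠ a → x ≠ b → f x = 0) : ∑ x, f x = f a + f b := by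
  rw [← Finset.sum_pair hab]
  refine (Finset.sum_subset (Finset.subset_univ _) ?_).symm
  intro x _ hx
  simp only [Finset.mem_insert, Finset.mem_singleton, not_or] at hx
  exact h x hx.1 hx.2

def Qmat (d : ℕ) (c s : Fin d → ℝ) :
    Matrix (Fin 2 × Fin d) (Fin 2 × Fin (2 * d)) ℝ := fun p q =>
  if ((q.2 : ℕ) = (p.2 : ℕ) ∧ q.1 = p.1) then c p.2
  else if ((q.2 : ℕ) = d + (p.2 : ℕ) ∧ q.1 = p.1) then
    (if p.1 = 0 then (1:ℝ) else -1) * s p.2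
  else 0

lemma main1 (d : ℕ) (c s : Fin d → ℝ) (h1 : ∀ j, c j * c j + s j * s j = 1) :
    Qmat d c s * (Qmat d c s)ᵀ = 1 := by
  ext ⟨i, j⟩ ⟨i', j'⟩
  have hd : d ≠ 0 := by have := j.isLt; omega
  rw [mul_apply]
  rw [sumtwo _ (i, (⟨(j:ℕ), by omega⟩ : Fin (2*d))) (i, (⟨d + (j:ℕ), by omega⟩ : Fin (2*d)))
      (by have := j.isLt; simp [Prod.ext_iff, Fin.ext_iff]; omega)]
  · rcases eq_or_ne j j' with rfl | hj
    · rcases eq_or_ne i i' with rfl | hi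
      · fin_cases i <;> simp [Qmat, one_apply, hd] <;> linarith [h1 j]
      · simp [Qmat, one_apply, hi, Ne.symm hi, Prod.ext_iff, hd]
    · have hj' : (j:ℕ) ≠ (j':ℕ) := fun h => hj (Fin.ext h)
      have hjl := j.isLt
      have hjl' := j'.isLt
      have ha : (j:ℕ) ≠ d + (j':ℕ) := by omega
      have hb : d + (j:ℕ) ≠ (j':ℕ) := by omega
      simp [Qmat, one_apply, hj, Prod.ext_iff, hj', hd, ha, hb]
  · rintro ⟨k, b⟩ h1 h2
    simp only [ne_eq, Prod.mk.injEq, not_and, Fin.ext_iff] at h1 h2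
    rcases eq_or_ne k i with rfl | hk
    · have hb1 : (b:ℕ) ≠ (j:ℕ) := by intro h; exact h1 rfl h
      have hb2 : (b:ℕ) ≠ d + (j:ℕ) := by intro h; exact h2 rfl h
      simp [Qmat, transpose_apply, hb1, hb2]
    · simp [Qmat, transpose_apply, hk]

lemma main2 (d : ℕ) (lam c s : Fin d → ℝ) (h2 : ∀ j, c j * c j - s j * s j = lam j) :
    Qmat d c s * blockDiagonal (fun _ : Fin (2 * d) => (!![0, 1; -1, 0] : Matrix (Fin 2) (Fin 2) ℝ))
        * (Qmat d c s)ᵀ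
      = blockDiagonal (fun j : Fin d => (!![0, lam j; -(lam j), 0] : Matrix (Fin 2) (Fin 2) ℝ)) := by
  have hQM : Qmat d c s * blockDiagonal (fun _ : Fin (2 * d) => (!![0, 1; -1, 0] : Matrix (Fin 2) (Fin 2) ℝ))
      = Matrix.of fun p q => (if ((q.2 : ℕ) = (p.2 : ℕ)) then c p.2
          else if ((q.2 : ℕ) = d + (p.2 : ℕ)) then (if p.1 = 0 then (1:ℝ) else -1) * s p.2
          else 0) * (!![0, 1; -1, 0] : Matrix (Fin 2) (Fin 2) ℝ) p.1 q.1 := by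
    ext ⟨i, j⟩ ⟨k', b'⟩
    rw [mul_apply]
    rw [Fintype.sum_eq_single ((i, b') : Fin 2 × Fin (2 * d)) ?_]
    · simp [Qmat, blockDiagonal_apply]
    · rintro ⟨k, b⟩ hx
      simp only [ne_eq, Prod.mk.injEq, not_and] at hx
      rcases eq_or_ne b b' with rfl | hb
      · have hk : k ≠ i := by intro h; exact hx h rfl
        simp [Qmat, blockDiagonal_apply, hk]
      · simp [blockDiagonal_apply, hb]
  rw [hQM]
  ext ⟨i, j⟩ ⟨i', j'⟩
  have hd : d ≠ 0 := by have := j.isLt; omega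
  have hjl := j.isLt
  have hjl' := j'.isLt
  rw [mul_apply]
  rw [sumtwo _ (i', (⟨(j:ℕ), by omega⟩ : Fin (2*d))) (i', (⟨d + (j:ℕ), by omega⟩ : Fin (2*d)))
      (by simp [Prod.ext_iff, Fin.ext_iff]; omega)]
  · have hb2 : d + (j:ℕ) ≠ (j':ℕ) := by omega
    rcases eq_or_ne j j' with rfl | hj
    · simp only [transpose_apply, Qmat, blockDiagonal_apply]
      fin_cases i <;> fin_cases i' <;>
        simp [hd, hb2] <;> linarith [h2 j]
    · have hj' : (j:ℕ) ≠ (j':ℕ) := fun h => hj (Fin.ext h)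
      have ha : (j:ℕ) ≠ d + (j':ℕ) := by omega
      simp [Qmat, blockDiagonal_apply, hj, hj', ha, hb2, hd]
  · rintro ⟨k', b'⟩ hx1 hx2
    simp only [ne_eq, Prod.mk.injEq, not_and, Fin.ext_iff] at hx1 hx2
    simp only [transpose_apply]
    rcases eq_or_ne k' i' with rfl | hk
    · have hb1 : (b':ℕ) ≠ (j:ℕ) := by intro h; exact hx1 rfl h
      have hb2 : (b':ℕ) ≠ d + (j:ℕ) := by intro h; exact hx2 rfl h
      simp [Qmat, hb1, hb2]
    · simp [Qmat, hk]

theorem stmt_1 (d : ℕ) (lam : Fin d → ℝ) (hlam : ∀ j, lam j ∈ Set.Icc (-1 : ℝ) 1) :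
    ∃ Q : Matrix (Fin 2 × Fin d) (Fin 2 × Fin (2 * d)) ℝ,
      Q * Qᵀ = 1 ∧
      Q * Matrix.blockDiagonal (fun _ : Fin (2 * d) => (!![0, 1; -1, 0] : Matrix (Fin 2) (Fin 2) ℝ)) * Qᵀ
        = Matrix.blockDiagonal (fun j : Fin d => (!![0, lam j; -(lam j), 0] : Matrix (Fin 2) (Fin 2) ℝ)) := by
  refine ⟨Qmat d (fun j => Real.sqrt ((1 + lam j) / 2)) (fun j => Real.sqrt ((1 - lam j) / 2)),
    main1 _ _ _ (fun j => ?_), main2 _ _ _ _ (fun j => ?_)⟩ <;>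
  · have h1 := (hlam j).1
    have h2 := (hlam j).2
    rw [Real.mul_self_sqrt (by linarith), Real.mul_self_sqrt (by linarith)]
    ring
end

section
/- Let A ∈ M_d(ℝ) be a positive semidefinite matrix with operator norm at most 1 (a positive contraction). Then there exists Q ∈ M_{2d×4d}(ℝ) with QQ^T = I_{2d} and Q J_{4d} Q^T = [[0, A], [-A, 0]], where J_{4d} = [[0, I_{2d}], [-I_{2d}, 0]]. -/
open Matrix

open scoped MatrixOrder in
lemma psd_sqrt_aux {n : Type*} [Fintype n] [DecidableEq n] (A : Matrix n n ℝ) (hA : A.PosSemidef) :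
    ∃ S : Matrix n n ℝ, S * S = A ∧ S.PosSemidef :=
  ⟨CFC.sqrt A, CFC.sqrt_mul_sqrt_self A hA.nonneg, (CFC.sqrt_nonneg A).posSemidef⟩

theorem stmt_2 (d : ℕ) (A : Matrix (Fin d) (Fin d) ℝ)
    (hA : A.PosSemidef) (hA1 : ((1 : Matrix (Fin d) (Fin d) ℝ) - A).PosSemidef) :
    ∃ Q : Matrix (Fin d ⊕ Fin d) (Fin (2 * d) ⊕ Fin (2 * d)) ℝ,
      Q * Qᵀ = 1 ∧
      Q * (Matrix.fromBlocks 0 1 (-1) 0 : Matrix (Fin (2 * d) ⊕ Fin (2 * d)) (Fin (2 * d) ⊕ Fin (2 * d)) ℝ) * Qᵀ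
        = Matrix.fromBlocks 0 A (-A) 0 := by
  -- square root of A
  obtain ⟨S, hSS', hSpsd⟩ := psd_sqrt_aux A hA
  have hSS : S * S = A := hSS'
  have hSsym : Sᵀ = S := by
    have := hSpsd.1.eq
    rwa [conjTranspose_eq_transpose_of_trivial] at this
  -- 1 - A*A is PSD
  have hAA : (1 - A * A).PosSemidef := by
    have h2 : (S * (1 - A) * Sᴴ).PosSemidef := hA1.mul_mul_conjTranspose_same S
    have h3 : S * (1 - A) * Sᴴ = A - A * A := by
      rw [conjTranspose_eq_transpose_of_trivial, hSsym]
      have hAS : A * S = S * A := by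
        calc A * S = S * S * S := by rw [hSS]
        _ = S * A := by rw [mul_assoc, hSS]
      rw [mul_sub, sub_mul, mul_one, hSS]
      rw [show S * A * S = A * A by rw [← hSS]; noncomm_ring [hAS]]
    have h4 := hA1.add (h3 ▸ h2)
    have : (1 : Matrix (Fin d) (Fin d) ℝ) - A + (A - A * A) = 1 - A * A := by abel
    rwa [this] at h4
  obtain ⟨C, hCC', hCpsd⟩ := psd_sqrt_aux _ hAA
  have hCC : C * C = 1 - A * A := hCC'
  have hCsym : Cᵀ = C := by
    have := hCpsd.1.eq
    rwa [conjTranspose_eq_transpose_of_trivial] at this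
  have hAsym : Aᵀ = A := by
    have := hA.1.eq
    rwa [conjTranspose_eq_transpose_of_trivial] at this
  -- the block matrix
  set Q1 : Matrix (Fin d) (Fin d ⊕ Fin d) ℝ := fromCols 1 0 with hQ1
  set Q2 : Matrix (Fin d) (Fin d ⊕ Fin d) ℝ := fromCols 0 0 with hQ2
  set Q3 : Matrix (Fin d) (Fin d ⊕ Fin d) ℝ := fromCols 0 C with hQ3
  set Q4 : Matrix (Fin d) (Fin d ⊕ Fin d) ℝ := fromCols A 0 with hQ4
  set M : Matrix (Fin d ⊕ Fin d) ((Fin d ⊕ Fin d) ⊕ (Fin d ⊕ Fin d)) ℝ :=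
    fromBlocks Q1 Q2 Q3 Q4 with hM
  -- equivalence of index types
  let e : (Fin d ⊕ Fin d) ≃ Fin (2 * d) := finSumFinEquiv.trans (finCongr (two_mul d).symm)
  let e₂ : (Fin (2 * d) ⊕ Fin (2 * d)) ≃ ((Fin d ⊕ Fin d) ⊕ (Fin d ⊕ Fin d)) :=
    (Equiv.sumCongr e e).symm
  refine ⟨M.submatrix id e₂, ?_, ?_⟩
  · have : (M.submatrix id e₂)ᵀ = Mᵀ.submatrix e₂ id := by
      rw [transpose_submatrix]
    rw [this, submatrix_mul_equiv, submatrix_id_id]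
    rw [hM, fromBlocks_transpose, fromBlocks_multiply]
    rw [hQ1, hQ2, hQ3, hQ4]
    simp only [transpose_fromCols, fromCols_mul_fromRows, transpose_zero, transpose_one,
      hCsym, hAsym]
    simp only [Matrix.mul_zero, Matrix.zero_mul, Matrix.mul_one, Matrix.one_mul, add_zero,
      zero_add, hCC, hSS]
    rw [show (1 : Matrix (Fin d) (Fin d) ℝ) - A * A + A * A = 1 by abel]
    rw [← fromBlocks_one]
  · have hJ : (Matrix.fromBlocks 0 1 (-1) 0 :
        Matrix (Fin (2 * d) ⊕ Fin (2 * d)) (Fin (2 * d) ⊕ Fin (2 * d)) ℝ)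
        = (Matrix.fromBlocks 0 1 (-1) 0 :
          Matrix ((Fin d ⊕ Fin d) ⊕ (Fin d ⊕ Fin d)) ((Fin d ⊕ Fin d) ⊕ (Fin d ⊕ Fin d)) ℝ).submatrix e₂ e₂ := by
      ext i j
      rcases i with i | i <;> rcases j with j | j <;>
        simp [e₂, Matrix.one_apply, Equiv.apply_eq_iff_eq, Matrix.submatrix_apply,
          EmbeddingLike.apply_eq_iff_eq]
    have hT : (M.submatrix id e₂)ᵀ = Mᵀ.submatrix e₂ id := by
      rw [transpose_submatrix]
    rw [hJ, hT, submatrix_mul_equiv, submatrix_mul_equiv, submatrix_id_id]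
    rw [hM, fromBlocks_transpose, fromBlocks_multiply, fromBlocks_multiply]
    rw [hQ1, hQ2, hQ3, hQ4]
    simp only [transpose_fromCols, fromCols_mul_fromRows, transpose_zero, transpose_one,
      hCsym, hAsym, Matrix.mul_zero, Matrix.zero_mul, Matrix.mul_one, Matrix.one_mul,
      Matrix.mul_neg, Matrix.neg_mul, add_zero, zero_add, neg_zero]
end

section
/- Suppose L = [[X, L₁₂], [L₂₁, L₂₂]] ∈ M_{2(d+d')}(ℝ) is (J_{2d} ⊕ J_{2d'})-symplectic, with X ∈ M_{2d}(ℝ), L₂₁ ∈ M_{2d'×2d}(ℝ), and set Y = L₂₁^T L₂₁. Then the complex Hermitian matrix Y + i(J_{2d} - X^T J_{2d} X) is positive semidefinite. -/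
open Matrix
open scoped ComplexOrder

lemma aux_psd_of_two_smul {n : Type*} [Fintype n] {M : Matrix n n ℂ}
    (h : ((2:ℂ) • M).PosSemidef) : M.PosSemidef := by
  refine PosSemidef.of_dotProduct_mulVec_nonneg ?_ ?_
  · have h1 := h.1
    rw [IsHermitian, conjTranspose_smul] at h1
    simp only [Complex.star_def, map_ofNat] at h1
    exact smul_right_injective _ (two_ne_zero) h1
  · intro x
    have h2 := h.dotProduct_mulVec_nonneg x
    rw [smul_mulVec, dotProduct_smul, smul_eq_mul] at h2
    rw [Complex.nonneg_iff] at h2 ⊢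
    simp only [Complex.mul_re, Complex.mul_im] at h2
    norm_num at h2
    constructor <;> [linarith [h2.1]; linarith [h2.2]]

lemma aux_one_add_I_smul_J_psd (k : ℕ) :
    ((1 : Matrix (Fin k ⊕ Fin k) (Fin k ⊕ Fin k) ℂ)
      + Complex.I • Matrix.fromBlocks 0 1 (-1) 0).PosSemidef := by
  set Jc : Matrix (Fin k ⊕ Fin k) (Fin k ⊕ Fin k) ℂ := Matrix.fromBlocks 0 1 (-1) 0 with hJc
  set M := 1 + Complex.I • Jc with hMdef
  have hJH : Jcᴴ = -Jc := by
    simp only [hJc, Matrix.fromBlocks_conjTranspose, conjTranspose_zero, conjTranspose_one,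
      conjTranspose_neg]
    ext (i|i) (j|j) <;> simp [Matrix.fromBlocks]
  have hJ2 : Jc * Jc = -1 := by
    simp only [hJc, Matrix.fromBlocks_multiply]
    ext (i|i) (j|j) <;> simp [Matrix.fromBlocks, Matrix.one_apply]
  have hHerm : Mᴴ = M := by
    simp [hMdef, conjTranspose_add, conjTranspose_smul, hJH, Complex.star_def, Complex.conj_I]
  have hMM : Mᴴ * M = (2:ℂ) • M := by
    rw [hHerm, hMdef]
    have h4 : (Complex.I • Jc) * (Complex.I • Jc) = 1 := by
      rw [smul_mul_assoc, mul_smul_comm, smul_smul, Complex.I_mul_I, hJ2]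
      simp
    rw [mul_add, add_mul, add_mul, h4]
    simp only [one_mul, mul_one]
    module
  apply aux_psd_of_two_smul
  rw [← hMM]
  exact Matrix.posSemidef_conjTranspose_mul_self M

theorem stmt_10 (d d' : ℕ)
    (X : Matrix (Fin d ⊕ Fin d) (Fin d ⊕ Fin d) ℝ)
    (L₁₂ : Matrix (Fin d ⊕ Fin d) (Fin d' ⊕ Fin d') ℝ)
    (L₂₁ : Matrix (Fin d' ⊕ Fin d') (Fin d ⊕ Fin d) ℝ)
    (L₂₂ : Matrix (Fin d' ⊕ Fin d') (Fin d' ⊕ Fin d') ℝ) :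
    let J : Matrix (Fin d ⊕ Fin d) (Fin d ⊕ Fin d) ℝ := Matrix.fromBlocks 0 1 (-1) 0
    let J' : Matrix (Fin d' ⊕ Fin d') (Fin d' ⊕ Fin d') ℝ := Matrix.fromBlocks 0 1 (-1) 0
    let L := Matrix.fromBlocks X L₁₂ L₂₁ L₂₂
    Lᵀ * Matrix.fromBlocks J 0 0 J' * L = Matrix.fromBlocks J 0 0 J' →
      ((L₂₁ᵀ * L₂₁).map Complex.ofReal
        + Complex.I • ((J - Xᵀ * J * X).map Complex.ofReal)).PosSemidef := by
  intro J J' L h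
  have hkey : Xᵀ * J * X + L₂₁ᵀ * J' * L₂₁ = J := by
    have := congrArg Matrix.toBlocks₁₁ h
    simpa [L, Matrix.fromBlocks_transpose, Matrix.fromBlocks_multiply,
      Matrix.toBlocks_fromBlocks₁₁, Matrix.mul_assoc] using this
  have hsub : J - Xᵀ * J * X = L₂₁ᵀ * J' * L₂₁ := sub_eq_of_eq_add' hkey.symm
  rw [hsub]
  set A : Matrix (Fin d' ⊕ Fin d') (Fin d ⊕ Fin d) ℂ := L₂₁.map Complex.ofReal with hA
  have hAH : Aᴴ = L₂₁ᵀ.map Complex.ofReal := by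
    ext i j
    simp [hA, Matrix.conjTranspose_apply, Matrix.map_apply]
  have hmul : ∀ (P : Matrix (Fin d' ⊕ Fin d') (Fin d' ⊕ Fin d') ℝ),
      (L₂₁ᵀ * P * L₂₁).map Complex.ofReal = Aᴴ * P.map Complex.ofReal * A := by
    intro P
    have hco : (Complex.ofReal : ℝ → ℂ) = ⇑Complex.ofRealHom := rfl
    rw [hAH, hA, hco, Matrix.map_mul, Matrix.map_mul]
  have hJmap : (J' : Matrix _ _ ℝ).map Complex.ofReal
      = Matrix.fromBlocks 0 1 (-1) 0 := by
    ext (i|i) (j|j) <;>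
      simp [J', Matrix.fromBlocks, Matrix.map_apply, Matrix.one_apply, Matrix.neg_apply, apply_ite]
  have key : (L₂₁ᵀ * L₂₁).map Complex.ofReal
        + Complex.I • ((L₂₁ᵀ * J' * L₂₁).map Complex.ofReal)
      = Aᴴ * ((1 : Matrix (Fin d' ⊕ Fin d') (Fin d' ⊕ Fin d') ℂ)
          + Complex.I • Matrix.fromBlocks 0 1 (-1) 0) * A := by
    rw [Matrix.mul_add, Matrix.add_mul, Matrix.mul_one]
    have h1 : (L₂₁ᵀ * L₂₁).map Complex.ofReal = Aᴴ * A := by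
      have := hmul 1
      simpa using this
    rw [h1, hmul J', hJmap]
    rw [Matrix.mul_smul, Matrix.smul_mul]
  rw [key]
  exact (aux_one_add_I_smul_J_psd d').conjTranspose_mul_mul_same A
end

section
/- Let X, Y ∈ M_{2d}(ℝ) with Y symmetric and assume Y + i(J_{2d} - X^T J_{2d} X) ≥ 0 (positive semidefinite as a complex matrix). Then there exists L₂₁ ∈ M_{4d×2d}(ℝ) such that L₂₁^T L₂₁ = Y and L₂₁^T J_{4d} L₂₁ = J_{2d} - X^T J_{2d} X. -/
open Matrix
open scoped ComplexOrder

theorem stmt_12 (d : ℕ) (X Y : Matrix (Fin d ⊕ Fin d) (Fin d ⊕ Fin d) ℝ) (hY : Yᵀ = Y)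
    (hpos : let J : Matrix (Fin d ⊕ Fin d) (Fin d ⊕ Fin d) ℝ := Matrix.fromBlocks 0 1 (-1) 0
      (Y.map Complex.ofReal + Complex.I • ((J - Xᵀ * J * X).map Complex.ofReal)).PosSemidef) :
    let J : Matrix (Fin d ⊕ Fin d) (Fin d ⊕ Fin d) ℝ := Matrix.fromBlocks 0 1 (-1) 0
    let J4 : Matrix (Fin (2 * d) ⊕ Fin (2 * d)) (Fin (2 * d) ⊕ Fin (2 * d)) ℝ :=
      Matrix.fromBlocks 0 1 (-1) 0
    ∃ L₂₁ : Matrix (Fin (2 * d) ⊕ Fin (2 * d)) (Fin d ⊕ Fin d) ℝ,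
      L₂₁ᵀ * L₂₁ = Y ∧ L₂₁ᵀ * J4 * L₂₁ = J - Xᵀ * J * X := by
  intro J J4
  simp only at hpos
  set K : Matrix (Fin d ⊕ Fin d) (Fin d ⊕ Fin d) ℝ := J - Xᵀ * J * X with hK
  obtain ⟨B, hB⟩ := by
    open MatrixOrder in exact CStarAlgebra.nonneg_iff_eq_star_mul_self.mp hpos.nonneg
  rw [star_eq_conjTranspose] at hB
  set P : Matrix (Fin d ⊕ Fin d) (Fin d ⊕ Fin d) ℝ := Matrix.of fun i j => (B i j).re with hP
  set Q : Matrix (Fin d ⊕ Fin d) (Fin d ⊕ Fin d) ℝ := Matrix.of fun i j => (B i j).im with hQ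
  have key : ∀ j k, Y j k = (Pᵀ * P + Qᵀ * Q) j k ∧ K j k = (Pᵀ * Q - Qᵀ * P) j k := by
    intro j k
    have h := congrFun (congrFun hB j) k
    simp only [Matrix.add_apply, Matrix.smul_apply, Matrix.map_apply, Matrix.mul_apply,
      Matrix.conjTranspose_apply, smul_eq_mul] at h
    have hre := congrArg Complex.re h
    have him := congrArg Complex.im h
    simp only [Complex.add_re, Complex.add_im, Complex.ofReal_re, Complex.ofReal_im,
      Complex.mul_re, Complex.mul_im, Complex.I_re, Complex.I_im, Complex.re_sum,
      Complex.im_sum, RCLike.star_def, Complex.conj_re, Complex.conj_im,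
      zero_mul, mul_zero, one_mul, zero_add, add_zero, sub_zero, zero_sub] at hre him
    constructor
    · rw [Matrix.add_apply, Matrix.mul_apply, Matrix.mul_apply, ← Finset.sum_add_distrib, hre]
      exact Finset.sum_congr rfl fun x _ => by
        simp only [Matrix.transpose_apply, hP, hQ, Matrix.of_apply]; ring
    · rw [Matrix.sub_apply, Matrix.mul_apply, Matrix.mul_apply, ← Finset.sum_sub_distrib, him]
      exact Finset.sum_congr rfl fun x _ => by
        simp only [Matrix.transpose_apply, hP, hQ, Matrix.of_apply]; ring
  have hYe : Y = Pᵀ * P + Qᵀ * Q := by ext j k; exact (key j k).1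
  have hKe : K = Pᵀ * Q - Qᵀ * P := by ext j k; exact (key j k).2
  set e : (Fin d ⊕ Fin d) ≃ Fin (2 * d) := finSumFinEquiv.trans (finCongr (two_mul d).symm)
  set P' : Matrix (Fin (2 * d)) (Fin d ⊕ Fin d) ℝ := P.submatrix e.symm id
  set Q' : Matrix (Fin (2 * d)) (Fin d ⊕ Fin d) ℝ := Q.submatrix e.symm id
  have hPP : P'ᵀ * P' = Pᵀ * P := by
    rw [show P'ᵀ = Pᵀ.submatrix id e.symm from rfl, Matrix.submatrix_mul_equiv,
      Matrix.submatrix_id_id]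
  have hQQ : Q'ᵀ * Q' = Qᵀ * Q := by
    rw [show Q'ᵀ = Qᵀ.submatrix id e.symm from rfl, Matrix.submatrix_mul_equiv,
      Matrix.submatrix_id_id]
  have hPQ : P'ᵀ * Q' = Pᵀ * Q := by
    rw [show P'ᵀ = Pᵀ.submatrix id e.symm from rfl, Matrix.submatrix_mul_equiv,
      Matrix.submatrix_id_id]
  have hQP : Q'ᵀ * P' = Qᵀ * P := by
    rw [show Q'ᵀ = Qᵀ.submatrix id e.symm from rfl, Matrix.submatrix_mul_equiv,
      Matrix.submatrix_id_id]
  refine ⟨Matrix.fromRows P' Q', ?_, ?_⟩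
  · rw [Matrix.transpose_fromRows, Matrix.fromCols_mul_fromRows, hPP, hQQ, hYe]
  · rw [show (J4 : Matrix _ _ ℝ) = Matrix.fromBlocks 0 1 (-1) 0 from rfl,
      Matrix.mul_assoc, Matrix.fromBlocks_mul_fromRows, Matrix.transpose_fromRows,
      Matrix.fromCols_mul_fromRows]
    simp only [Matrix.zero_mul, Matrix.one_mul, Matrix.neg_mul, zero_add, add_zero,
      Matrix.mul_neg]
    rw [hPQ, hQP, ← sub_eq_add_neg, ← hKe]
end

section
/- Let X, Y ∈ M_{2d}(ℝ) with Y symmetric. The following are equivalent: (i) there exist d' ≥ 1 and a (J_{2d} ⊕ J_{2d'})-symplectic matrix L = [[X, L₁₂], [L₂₁, L₂₂]] with L₂₁^T L₂₁ = Y; (ii) Y + i(J_{2d} - X^T J_{2d} X) ≥ 0; (iii) Y - i(J_{2d} - X^T J_{2d} X) ≥ 0. Moreover in each case Y ≥ 0, and in (i) one may take d' = 2d. -/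
open Matrix
open scoped ComplexOrder

set_option maxHeartbeats 1000000

noncomputable section StmtAux


lemma darboux : ∀ (m : ℕ) (V : Type) [AddCommGroup V] [Module ℝ V] [FiniteDimensional ℝ V]
    (B : V →ₗ[ℝ] V →ₗ[ℝ] ℝ) (_halt : ∀ v, B v v = 0)
    (_hnd : ∀ v, (∀ w, B v w = 0) → v = 0)
    (_hdim : Module.finrank ℝ V = 2 * m),
    ∃ e f : Fin m → V, (∀ i j, B (e i) (e j) = 0) ∧ (∀ i j, B (f i) (f j) = 0) ∧
      (∀ i j, B (e i) (f j) = if i = j then 1 else 0) := by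
  intro m
  induction m with
  | zero => intro V _ _ _ B _ _ _; exact ⟨Fin.elim0, Fin.elim0, fun i => i.elim0, fun i => i.elim0,
      fun i => i.elim0⟩
  | succ m ih =>
    intro V _ _ _ B halt hnd hdim
    have hskew : ∀ v w, B v w = - B w v := by
      intro v w
      have h := halt (v + w)
      simp only [map_add, LinearMap.add_apply, halt] at h
      linarith
    have hnt : Nontrivial V := Module.nontrivial_of_finrank_pos (R := ℝ) (by omega)
    obtain ⟨x, hx⟩ := exists_ne (0 : V)
    have hy0 : ∃ y0, B x y0 ≠ 0 := by
      by_contra h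
      push_neg at h
      exact hx (hnd x h)
    obtain ⟨y0, hy0⟩ := hy0
    set y : V := (B x y0)⁻¹ • y0 with hy
    have hxy : B x y = 1 := by
      simp [hy, _root_.map_smul, inv_mul_cancel₀ hy0]
    have hyx : B y x = -1 := by rw [hskew, hxy]
    -- the symplectic complement of span{x,y}
    set Φ : V →ₗ[ℝ] ℝ × ℝ := LinearMap.prod (B x) (B y) with hΦ
    have hΦsurj : LinearMap.range Φ = ⊤ := by
      rw [LinearMap.range_eq_top]
      intro ⟨a, b⟩
      refine ⟨a • y - b • x, ?_⟩
      simp [hΦ, LinearMap.prod_apply, _root_.map_smul, map_sub, hxy, hyx, halt]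
    set W := LinearMap.ker Φ with hW
    have hdimW : Module.finrank ℝ W = 2 * m := by
      have h1 := LinearMap.finrank_range_add_finrank_ker Φ
      rw [hΦsurj, finrank_top] at h1
      have h2 : Module.finrank ℝ (ℝ × ℝ) = 2 := by
        rw [Module.finrank_prod, Module.finrank_self]
      rw [h2, hdim, ← hW] at h1
      omega
    -- membership facts
    have memW : ∀ v : V, v ∈ W ↔ B x v = 0 ∧ B y v = 0 := by
      intro v
      constructor
      · intro h
        have := (LinearMap.mem_ker.mp h)
        exact ⟨congrArg Prod.fst this, congrArg Prod.snd this⟩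
      · intro ⟨h1, h2⟩
        exact LinearMap.mem_ker.mpr (by simp [hΦ, h1, h2])
    set B' : W →ₗ[ℝ] W →ₗ[ℝ] ℝ := B.compl₁₂ W.subtype W.subtype with hB'
    have hB'apply : ∀ v w : W, B' v w = B (v : V) (w : V) := fun v w => rfl
    have halt' : ∀ v : W, B' v v = 0 := fun v => halt _
    have hnd' : ∀ v : W, (∀ w : W, B' v w = 0) → v = 0 := by
      intro z hz
      have hzx : B (z : V) x = 0 := by
        rw [hskew]; rw [← neg_zero]; congr 1; exact ((memW _).mp z.2).1
      have hzy : B (z : V) y = 0 := by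
        rw [hskew]; rw [← neg_zero]; congr 1; exact ((memW _).mp z.2).2
      have hall : ∀ v : V, B (z : V) v = 0 := by
        intro v
        have hv' : v + (B y v) • x - (B x v) • y ∈ W := by
          rw [memW]
          constructor
          · simp [map_add, map_sub, _root_.map_smul, halt, hxy]
          · simp [map_add, map_sub, _root_.map_smul, halt, hyx]
        have h0 := hz ⟨_, hv'⟩
        rw [hB'apply] at h0
        simp only [map_add, map_sub, _root_.map_smul, smul_eq_mul] at h0
        rw [hzx, hzy] at h0
        simpa using h0
      have := hnd _ hall
      exact Subtype.ext this
    obtain ⟨e', f', he', hf', hef'⟩ := ih W B' halt' hnd' hdimW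
    refine ⟨Fin.cons x (fun k => (e' k : V)), Fin.cons y (fun k => (f' k : V)), ?_, ?_, ?_⟩
    · intro i j
      induction i using Fin.cases with
      | zero =>
        induction j using Fin.cases with
        | zero => simpa using halt x
        | succ j => simpa using ((memW _).mp (e' j).2).1
      | succ i =>
        induction j using Fin.cases with
        | zero =>
          simp only [Fin.cons_zero, Fin.cons_succ]
          rw [hskew]
          simpa using ((memW _).mp (e' i).2).1
        | succ j => simp only [Fin.cons_succ]; exact he' i j
    · intro i j
      induction i using Fin.cases with
      | zero =>
        induction j using Fin.cases with
        | zero => simpa using halt y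
        | succ j => simpa using ((memW _).mp (f' j).2).2
      | succ i =>
        induction j using Fin.cases with
        | zero =>
          simp only [Fin.cons_zero, Fin.cons_succ]
          rw [hskew]
          simpa using ((memW _).mp (f' i).2).2
        | succ j => simp only [Fin.cons_succ]; exact hf' i j
    · intro i j
      induction i using Fin.cases with
      | zero =>
        induction j using Fin.cases with
        | zero => simpa using hxy
        | succ j =>
          simp only [Fin.cons_zero, Fin.cons_succ]
          rw [if_neg (Fin.succ_ne_zero j).symm]
          simpa using ((memW _).mp (f' j).2).1
      | succ i =>
        induction j using Fin.cases with
        | zero =>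
          simp only [Fin.cons_zero, Fin.cons_succ]
          rw [if_neg (Fin.succ_ne_zero i), hskew]
          simpa using ((memW _).mp (e' i).2).2
        | succ j =>
          simp only [Fin.cons_succ, Fin.succ_inj]
          exact hef' i j

abbrev stdJ (k : ℕ) : Matrix (Fin k ⊕ Fin k) (Fin k ⊕ Fin k) ℝ := Matrix.fromBlocks 0 1 (-1) 0

lemma stdJ_transpose (k : ℕ) : (stdJ k)ᵀ = -(stdJ k) := by
  rw [stdJ, Matrix.fromBlocks_transpose, Matrix.fromBlocks_neg]
  congr 1 <;> simp

lemma stdJ_mul_self (k : ℕ) : stdJ k * stdJ k = -1 := by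
  rw [stdJ, Matrix.fromBlocks_multiply, ← Matrix.fromBlocks_one, Matrix.fromBlocks_neg]
  congr 1 <;> simp


lemma complete (p q : ℕ)
    (K : Matrix ((Fin p ⊕ Fin p) ⊕ (Fin q ⊕ Fin q)) (Fin p ⊕ Fin p) ℝ)
    (hK : Kᵀ * (fromBlocks (stdJ p) 0 0 (stdJ q)) * K = stdJ p) :
    ∃ N : Matrix ((Fin p ⊕ Fin p) ⊕ (Fin q ⊕ Fin q)) (Fin q ⊕ Fin q) ℝ,
      Kᵀ * (fromBlocks (stdJ p) 0 0 (stdJ q)) * N = 0 ∧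
      Nᵀ * (fromBlocks (stdJ p) 0 0 (stdJ q)) * N = stdJ q := by
  set Ω : Matrix ((Fin p ⊕ Fin p) ⊕ (Fin q ⊕ Fin q)) ((Fin p ⊕ Fin p) ⊕ (Fin q ⊕ Fin q)) ℝ := fromBlocks (stdJ p) 0 0 (stdJ q) with hΩ
  have hΩt : Ωᵀ = -Ω := by
    rw [hΩ, Matrix.fromBlocks_transpose, Matrix.fromBlocks_neg]
    congr 1 <;> simp [stdJ_transpose]
  have hΩ2 : Ω * Ω = -1 := by
    rw [hΩ, Matrix.fromBlocks_multiply, ← Matrix.fromBlocks_one, Matrix.fromBlocks_neg]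
    congr 1 <;> simp [stdJ_mul_self]
  set T : (((Fin p ⊕ Fin p) ⊕ (Fin q ⊕ Fin q)) → ℝ) →ₗ[ℝ] ((Fin p ⊕ Fin p) → ℝ) := (Kᵀ * Ω).mulVecLin with hT
  have hTapp : ∀ v, T v = (Kᵀ * Ω) *ᵥ v := fun v => rfl
  have hTsec : ∀ u, T ((K * (-(stdJ p))) *ᵥ u) = u := by
    intro u
    rw [hTapp, Matrix.mulVec_mulVec]
    have h : Kᵀ * Ω * (K * -stdJ p) = 1 := by
      rw [← Matrix.mul_assoc, hK, Matrix.mul_neg, stdJ_mul_self, neg_neg]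
    rw [h, Matrix.one_mulVec]
  set W := LinearMap.ker T with hW
  have hdimW : Module.finrank ℝ W = 2 * q := by
    have h1 := LinearMap.finrank_range_add_finrank_ker T
    have h2 : LinearMap.range T = ⊤ := LinearMap.range_eq_top.mpr (fun u => ⟨_, hTsec u⟩)
    rw [h2, finrank_top, ← hW] at h1
    rw [Module.finrank_fintype_fun_eq_card, Module.finrank_fintype_fun_eq_card] at h1
    simp only [Fintype.card_sum, Fintype.card_fin] at h1
    omega
  have memW : ∀ v : W, (Kᵀ * Ω) *ᵥ (v : ((Fin p ⊕ Fin p) ⊕ (Fin q ⊕ Fin q)) → ℝ) = 0 := by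
    intro v
    have := LinearMap.mem_ker.mp v.2
    rwa [hTapp] at this
  -- the bilinear form
  have hBf : ∀ v w : ((Fin p ⊕ Fin p) ⊕ (Fin q ⊕ Fin q)) → ℝ, v ⬝ᵥ Ω *ᵥ w = -(w ⬝ᵥ Ω *ᵥ v) := by
    intro v w
    rw [Matrix.dotProduct_mulVec, ← Matrix.mulVec_transpose, hΩt, Matrix.neg_mulVec,
      neg_dotProduct, dotProduct_comm]
  set B : (((Fin p ⊕ Fin p) ⊕ (Fin q ⊕ Fin q)) → ℝ) →ₗ[ℝ] (((Fin p ⊕ Fin p) ⊕ (Fin q ⊕ Fin q)) → ℝ) →ₗ[ℝ] ℝ := LinearMap.mk₂ ℝ (fun v w => v ⬝ᵥ Ω *ᵥ w)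
    (fun m₁ m₂ n => by simp only [add_dotProduct])
    (fun c m n => by simp only [smul_dotProduct, smul_eq_mul])
    (fun m n₁ n₂ => by simp only [Matrix.mulVec_add, dotProduct_add])
    (fun c m n => by simp only [Matrix.mulVec_smul, dotProduct_smul, smul_eq_mul]) with hB
  set B' : W →ₗ[ℝ] W →ₗ[ℝ] ℝ := B.compl₁₂ W.subtype W.subtype with hB'
  have hB'app : ∀ v w : W, B' v w = (v : ((Fin p ⊕ Fin p) ⊕ (Fin q ⊕ Fin q)) → ℝ) ⬝ᵥ Ω *ᵥ (w : ((Fin p ⊕ Fin p) ⊕ (Fin q ⊕ Fin q)) → ℝ) := fun v w => rfl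
  have halt' : ∀ v : W, B' v v = 0 := by
    intro v
    have := hBf (v : ((Fin p ⊕ Fin p) ⊕ (Fin q ⊕ Fin q)) → ℝ) (v : ((Fin p ⊕ Fin p) ⊕ (Fin q ⊕ Fin q)) → ℝ)
    rw [hB'app]
    linarith
  have hnd' : ∀ v : W, (∀ w : W, B' v w = 0) → v = 0 := by
    intro z hz
    have hzW : (Kᵀ * Ω) *ᵥ (z : ((Fin p ⊕ Fin p) ⊕ (Fin q ⊕ Fin q)) → ℝ) = 0 := memW z
    have hzK : ∀ u, (z : ((Fin p ⊕ Fin p) ⊕ (Fin q ⊕ Fin q)) → ℝ) ⬝ᵥ Ω *ᵥ (K *ᵥ u) = 0 := by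
      intro u
      rw [Matrix.mulVec_mulVec, Matrix.dotProduct_mulVec, ← Matrix.mulVec_transpose,
        Matrix.transpose_mul, hΩt, Matrix.mul_neg, Matrix.neg_mulVec, hzW]
      simp
    have hall : ∀ v : ((Fin p ⊕ Fin p) ⊕ (Fin q ⊕ Fin q)) → ℝ, (z : ((Fin p ⊕ Fin p) ⊕ (Fin q ⊕ Fin q)) → ℝ) ⬝ᵥ Ω *ᵥ v = 0 := by
      intro v
      have hwmem : v - (K * (-(stdJ p))) *ᵥ (T v) ∈ W := by
        rw [hW, LinearMap.mem_ker, map_sub]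
        rw [hTsec, sub_self]
      have h2 := hz ⟨_, hwmem⟩
      rw [hB'app] at h2
      have h3 : (z : ((Fin p ⊕ Fin p) ⊕ (Fin q ⊕ Fin q)) → ℝ) ⬝ᵥ Ω *ᵥ (v - (K * (-(stdJ p))) *ᵥ (T v)) = 0 := h2
      rw [Matrix.mulVec_sub, dotProduct_sub] at h3
      have h4 : (z : ((Fin p ⊕ Fin p) ⊕ (Fin q ⊕ Fin q)) → ℝ) ⬝ᵥ Ω *ᵥ ((K * (-(stdJ p))) *ᵥ (T v)) = 0 := by
        rw [← Matrix.mulVec_mulVec]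
        exact hzK _
      linarith
    have h5 := hall (Ω *ᵥ (z : ((Fin p ⊕ Fin p) ⊕ (Fin q ⊕ Fin q)) → ℝ))
    rw [Matrix.mulVec_mulVec, hΩ2, Matrix.neg_mulVec, Matrix.one_mulVec,
      dotProduct_neg, neg_eq_zero, dotProduct_self_eq_zero] at h5
    exact Subtype.ext h5
  obtain ⟨e, f, hee, hff, hef⟩ := darboux q W B' halt' hnd' hdimW
  set vcol : Fin q ⊕ Fin q → (((Fin p ⊕ Fin p) ⊕ (Fin q ⊕ Fin q)) → ℝ) :=
    Sum.elim (fun i => ((e i : ((Fin p ⊕ Fin p) ⊕ (Fin q ⊕ Fin q)) → ℝ))) (fun i => ((f i : ((Fin p ⊕ Fin p) ⊕ (Fin q ⊕ Fin q)) → ℝ))) with hvcol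
  have hvW : ∀ c, (Kᵀ * Ω) *ᵥ (vcol c) = 0 := by
    rintro (i | i)
    · exact memW (e i)
    · exact memW (f i)
  have hvGram : ∀ c c', (vcol c) ⬝ᵥ Ω *ᵥ (vcol c') = stdJ q c c' := by
    rintro (i | i) (j | j)
    · have h := hee i j
      rw [hB'app] at h
      simp only [hvcol, Sum.elim_inl]
      rw [h]
      simp [stdJ]
    · have h := hef i j
      rw [hB'app] at h
      simp only [hvcol, Sum.elim_inl, Sum.elim_inr]
      rw [h]
      simp [stdJ, Matrix.one_apply]
    · have h := hef j i
      rw [hB'app] at h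
      simp only [hvcol, Sum.elim_inl, Sum.elim_inr]
      rw [hBf, h]
      simp only [stdJ, Matrix.fromBlocks_apply₂₁, Matrix.neg_apply, Matrix.one_apply]
      by_cases hij : i = j
      · subst hij; simp
      · rw [if_neg (fun hh => hij hh.symm), if_neg hij, neg_zero]
    · have h := hff i j
      rw [hB'app] at h
      simp only [hvcol, Sum.elim_inr]
      rw [h]
      simp [stdJ]
  refine ⟨Matrix.of (fun r c => vcol c r), ?_, ?_⟩
  · ext c c'
    have h := congrFun (hvW c') c
    rw [Matrix.mulVec] at h
    rw [Matrix.mul_apply, Matrix.zero_apply]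
    simpa [dotProduct] using h
  · ext c c'
    rw [← hvGram c c']
    rw [Matrix.mul_apply]
    simp only [Matrix.mul_apply, Matrix.transpose_apply, Matrix.of_apply, dotProduct,
      Matrix.mulVec, Finset.sum_mul, Finset.mul_sum, mul_assoc]
    exact Finset.sum_comm

lemma map_mul' {l m n : Type} [Fintype m] (M : Matrix l m ℝ) (N : Matrix m n ℝ) :
    (M * N).map Complex.ofReal = M.map Complex.ofReal * N.map Complex.ofReal :=
  Matrix.map_mul (f := Complex.ofRealHom)

lemma map_neg' {l m : Type} (M : Matrix l m ℝ) :
    (-M).map Complex.ofReal = -(M.map Complex.ofReal) := by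
  ext i j; simp [Matrix.map_apply]

lemma conjTranspose_map' {l m : Type} (M : Matrix l m ℝ) :
    (M.map Complex.ofReal)ᴴ = Mᵀ.map Complex.ofReal := by
  ext i j; simp [Matrix.conjTranspose_apply, Matrix.map_apply, Complex.conj_ofReal]

/-- The key positivity: `CᵀC + i CᵀJC ≥ 0`. -/
lemma CJC_pos (k : ℕ) {m : Type} [Fintype m] (C : Matrix (Fin k ⊕ Fin k) m ℝ) :
    ((Cᵀ * C).map Complex.ofReal
      + Complex.I • ((Cᵀ * stdJ k * C).map Complex.ofReal)).PosSemidef := by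
  set Jc : Matrix (Fin k ⊕ Fin k) (Fin k ⊕ Fin k) ℂ := (stdJ k).map Complex.ofReal with hJc
  set M₀ : Matrix (Fin k ⊕ Fin k) (Fin k ⊕ Fin k) ℂ := 1 + Complex.I • Jc with hM₀
  have hJcH : Jcᴴ = -Jc := by
    rw [hJc, conjTranspose_map', stdJ_transpose, map_neg']
  have hJc2 : Jc * Jc = -1 := by
    rw [hJc, ← map_mul', stdJ_mul_self]
    ext i j
    simp [Matrix.map_apply, Matrix.one_apply, apply_ite Complex.ofReal]
  have hM₀H : M₀ᴴ = M₀ := by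
    rw [hM₀, Matrix.conjTranspose_add, Matrix.conjTranspose_one, Matrix.conjTranspose_smul,
      hJcH, Complex.star_def, Complex.conj_I, neg_smul, smul_neg, neg_neg]
  have hM₀sq : M₀ * M₀ = (2 : ℂ) • M₀ := by
    have hII : (Complex.I • Jc) * (Complex.I • Jc) = (1 : Matrix (Fin k ⊕ Fin k) (Fin k ⊕ Fin k) ℂ) := by
      rw [smul_mul_assoc, mul_smul_comm, smul_smul, hJc2, Complex.I_mul_I, neg_smul, one_smul,
        neg_neg]
    rw [hM₀, mul_add, add_mul, add_mul, one_mul, mul_one, hII, two_smul, Matrix.one_mul]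
    abel
  have hM₀pos : M₀.PosSemidef := by
    set c : ℂ := Complex.ofReal ((Real.sqrt 2)⁻¹) with hc
    have h1 : (c • M₀)ᴴ * (c • M₀) = M₀ := by
      rw [Matrix.conjTranspose_smul, hM₀H, Matrix.smul_mul, Matrix.mul_smul, smul_smul,
        hM₀sq, smul_smul]
      have h2 : star c * c * 2 = 1 := by
        rw [hc, Complex.star_def, Complex.conj_ofReal, ← Complex.ofReal_mul]
        have h3 : (Real.sqrt 2)⁻¹ * (Real.sqrt 2)⁻¹ = 2⁻¹ := by
          rw [← mul_inv, Real.mul_self_sqrt (by norm_num : (0:ℝ) ≤ 2)]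
        rw [h3]
        norm_num
      rw [h2, one_smul]
    rw [← h1]
    exact Matrix.posSemidef_conjTranspose_mul_self _
  have hkey : (Cᵀ * C).map Complex.ofReal
      + Complex.I • ((Cᵀ * stdJ k * C).map Complex.ofReal)
      = (C.map Complex.ofReal)ᴴ * M₀ * (C.map Complex.ofReal) := by
    rw [hM₀, Matrix.mul_add, Matrix.mul_one, Matrix.mul_smul, Matrix.add_mul, Matrix.smul_mul,
      hJc, map_mul', map_mul', map_mul', conjTranspose_map']
  rw [hkey]
  exact hM₀pos.conjTranspose_mul_mul_same _

lemma dil_to_pos (d d' : ℕ) (X Y : Matrix (Fin d ⊕ Fin d) (Fin d ⊕ Fin d) ℝ)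
    (L₁₂ : Matrix (Fin d ⊕ Fin d) (Fin d' ⊕ Fin d') ℝ)
    (L₂₁ : Matrix (Fin d' ⊕ Fin d') (Fin d ⊕ Fin d) ℝ)
    (L₂₂ : Matrix (Fin d' ⊕ Fin d') (Fin d' ⊕ Fin d') ℝ)
    (heq : (fromBlocks X L₁₂ L₂₁ L₂₂)ᵀ * fromBlocks (stdJ d) 0 0 (stdJ d')
        * fromBlocks X L₁₂ L₂₁ L₂₂ = fromBlocks (stdJ d) 0 0 (stdJ d'))
    (hYe : L₂₁ᵀ * L₂₁ = Y) :
    (Y.map Complex.ofReal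
      + Complex.I • ((stdJ d - Xᵀ * stdJ d * X).map Complex.ofReal)).PosSemidef := by
  rw [Matrix.fromBlocks_transpose, Matrix.fromBlocks_multiply, Matrix.fromBlocks_multiply,
    Matrix.fromBlocks_inj] at heq
  obtain ⟨h11, -, -, -⟩ := heq
  simp only [Matrix.mul_zero, Matrix.zero_mul, add_zero, zero_add] at h11
  have hA : stdJ d - Xᵀ * stdJ d * X = L₂₁ᵀ * stdJ d' * L₂₁ := by
    rw [sub_eq_iff_eq_add']
    exact h11.symm
  rw [hA, ← hYe]
  exact CJC_pos d' L₂₁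

lemma skewA (d : ℕ) (X : Matrix (Fin d ⊕ Fin d) (Fin d ⊕ Fin d) ℝ) :
    (stdJ d - Xᵀ * stdJ d * X)ᵀ = -(stdJ d - Xᵀ * stdJ d * X) := by
  have h1 : (Xᵀ * stdJ d * X)ᵀ = -(Xᵀ * stdJ d * X) := by
    rw [Matrix.transpose_mul, Matrix.transpose_mul, Matrix.transpose_transpose, stdJ_transpose]
    simp [Matrix.neg_mul, Matrix.mul_neg, Matrix.mul_assoc]
  rw [Matrix.transpose_sub, stdJ_transpose, h1]
  abel

lemma pos_iff_neg_pos {n : Type} [Fintype n] [DecidableEq n] (Y A : Matrix n n ℝ)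
    (hY : Yᵀ = Y) (hA : Aᵀ = -A) :
    (Y.map Complex.ofReal + Complex.I • A.map Complex.ofReal).PosSemidef ↔
    (Y.map Complex.ofReal - Complex.I • A.map Complex.ofReal).PosSemidef := by
  have key : (Y.map Complex.ofReal + Complex.I • A.map Complex.ofReal)ᵀ
      = Y.map Complex.ofReal - Complex.I • A.map Complex.ofReal := by
    rw [Matrix.transpose_add, Matrix.transpose_smul, ← Matrix.transpose_map,
      ← Matrix.transpose_map, hY, hA, map_neg', smul_neg, ← sub_eq_add_neg]
  have key2 : (Y.map Complex.ofReal - Complex.I • A.map Complex.ofReal)ᵀ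
      = Y.map Complex.ofReal + Complex.I • A.map Complex.ofReal := by
    rw [Matrix.transpose_sub, Matrix.transpose_smul, ← Matrix.transpose_map,
      ← Matrix.transpose_map, hY, hA, map_neg', smul_neg, sub_neg_eq_add]
  constructor
  · intro h
    rw [← key]
    exact h.transpose
  · intro h
    rw [← key2]
    exact h.transpose

lemma real_pos {n : Type} [Fintype n] [DecidableEq n] (Y A : Matrix n n ℝ)
    (hY : Yᵀ = Y) (hA : Aᵀ = -A)
    (h : (Y.map Complex.ofReal + Complex.I • A.map Complex.ofReal).PosSemidef) :
    Y.PosSemidef := by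
  have dm : ∀ (M : Matrix n n ℝ) (x : n → ℝ),
      (fun i => ((x i : ℂ))) ⬝ᵥ ((M.map Complex.ofReal) *ᵥ (fun i => ((x i : ℂ))))
        = ((x ⬝ᵥ (M *ᵥ x) : ℝ) : ℂ) := by
    intro M x
    simp only [dotProduct, Matrix.mulVec, Matrix.map_apply]
    push_cast
    rfl
  refine Matrix.PosSemidef.of_dotProduct_mulVec_nonneg ?_ ?_
  · show Yᴴ = Y
    ext i j
    calc Yᴴ i j = Y j i := by simp [Matrix.conjTranspose_apply]
    _ = Yᵀ i j := rfl
    _ = Y i j := by rw [hY]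
  · intro x
    simp only [star_trivial]
    have h2 := h.dotProduct_mulVec_nonneg (fun i => ((x i : ℂ)))
    have hstar : star (fun i => ((x i : ℂ))) = fun i => ((x i : ℂ)) := by
      funext i
      simp [Complex.conj_ofReal]
    rw [hstar, Matrix.add_mulVec, dotProduct_add, Matrix.smul_mulVec,
      dotProduct_smul, dm, dm] at h2
    have hskew : x ⬝ᵥ (A *ᵥ x) = 0 := by
      have h3 : x ⬝ᵥ (A *ᵥ x) = -(x ⬝ᵥ (A *ᵥ x)) := by
        conv_lhs => rw [Matrix.dotProduct_mulVec, ← Matrix.mulVec_transpose, hA,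
          Matrix.neg_mulVec, neg_dotProduct, dotProduct_comm]
      linarith
    rw [hskew] at h2
    simp only [Complex.ofReal_zero, smul_zero, add_zero] at h2
    exact Complex.zero_le_real.mp h2

lemma exists_C (d : ℕ) (Y A : Matrix (Fin d ⊕ Fin d) (Fin d ⊕ Fin d) ℝ)
    (h : (Y.map Complex.ofReal + Complex.I • A.map Complex.ofReal).PosSemidef) :
    ∃ C : Matrix (Fin (2*d) ⊕ Fin (2*d)) (Fin d ⊕ Fin d) ℝ,
      Cᵀ * C = Y ∧ Cᵀ * stdJ (2*d) * C = A := by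
  obtain ⟨M, hM⟩ : ∃ M : Matrix (Fin d ⊕ Fin d) (Fin d ⊕ Fin d) ℂ,
      Y.map Complex.ofReal + Complex.I • A.map Complex.ofReal = Mᴴ * M := by
    open MatrixOrder in
    obtain ⟨B, hB⟩ := CStarAlgebra.nonneg_iff_eq_star_mul_self.mp (Matrix.nonneg_iff_posSemidef.mpr h)
    exact ⟨B, hB⟩
  set e2 : Fin d ⊕ Fin d ≃ Fin (2*d) := finSumFinEquiv.trans (finCongr (two_mul d).symm) with he2
  set Cre : Matrix (Fin (2*d)) (Fin d ⊕ Fin d) ℝ :=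
    Matrix.of (fun a c => (M (e2.symm a) c).re) with hCre
  set Cim : Matrix (Fin (2*d)) (Fin d ⊕ Fin d) ℝ :=
    Matrix.of (fun a c => (M (e2.symm a) c).im) with hCim
  have hent : ∀ j k, (∑ b, (starRingEnd ℂ) (M b j) * M b k)
      = Complex.ofReal (Y j k) + Complex.I * Complex.ofReal (A j k) := by
    intro j k
    have h1 := congrFun (congrFun hM j) k
    simp only [Matrix.add_apply, Matrix.smul_apply, Matrix.map_apply, smul_eq_mul,
      Matrix.mul_apply, Matrix.conjTranspose_apply, Complex.star_def] at h1
    exact h1.symm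
  have hre : ∀ j k, (∑ b, ((M b j).re * (M b k).re + (M b j).im * (M b k).im)) = Y j k := by
    intro j k
    have h1 := congrArg Complex.re (hent j k)
    rw [Complex.re_sum] at h1
    have h2 : ∀ b : Fin d ⊕ Fin d, ((starRingEnd ℂ) (M b j) * M b k).re
        = (M b j).re * (M b k).re + (M b j).im * (M b k).im := by
      intro b
      simp only [Complex.mul_re, Complex.conj_re, Complex.conj_im]
      ring
    rw [Finset.sum_congr rfl (fun b _ => h2 b)] at h1
    rw [h1]
    simp
  have him : ∀ j k, (∑ b, ((M b j).re * (M b k).im - (M b j).im * (M b k).re)) = A j k := by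
    intro j k
    have h1 := congrArg Complex.im (hent j k)
    rw [Complex.im_sum] at h1
    have h2 : ∀ b : Fin d ⊕ Fin d, ((starRingEnd ℂ) (M b j) * M b k).im
        = (M b j).re * (M b k).im - (M b j).im * (M b k).re := by
      intro b
      simp only [Complex.mul_im, Complex.conj_re, Complex.conj_im]
      ring
    rw [Finset.sum_congr rfl (fun b _ => h2 b)] at h1
    rw [h1]
    simp
  refine ⟨fromRows Cre Cim, ?_, ?_⟩
  · rw [Matrix.transpose_fromRows, Matrix.fromCols_mul_fromRows]
    ext j k
    rw [Matrix.add_apply, Matrix.mul_apply, Matrix.mul_apply, ← Finset.sum_add_distrib]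
    rw [← hre j k, ← Equiv.sum_comp e2.symm (fun b => (M b j).re * (M b k).re
      + (M b j).im * (M b k).im)]
    simp [hCre, hCim]
  · rw [Matrix.mul_assoc, stdJ, Matrix.fromBlocks_mul_fromRows, Matrix.transpose_fromRows,
      Matrix.fromCols_mul_fromRows]
    simp only [Matrix.zero_mul, Matrix.one_mul, add_zero, zero_add,
      Matrix.neg_mul, Matrix.mul_neg, Matrix.mul_zero]
    ext j k
    rw [Matrix.add_apply, Matrix.neg_apply, Matrix.mul_apply, Matrix.mul_apply,
      ← Finset.sum_neg_distrib, ← Finset.sum_add_distrib]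
    rw [← him j k, ← Equiv.sum_comp e2.symm (fun b => (M b j).re * (M b k).im
      - (M b j).im * (M b k).re)]
    apply Finset.sum_congr rfl
    intro b _
    simp [hCre, hCim]
    ring

lemma pos_to_dil (d : ℕ) (X Y : Matrix (Fin d ⊕ Fin d) (Fin d ⊕ Fin d) ℝ)
    (h : (Y.map Complex.ofReal
      + Complex.I • ((stdJ d - Xᵀ * stdJ d * X).map Complex.ofReal)).PosSemidef) :
    ∃ (L₁₂ : Matrix (Fin d ⊕ Fin d) (Fin (2*d) ⊕ Fin (2*d)) ℝ)
      (L₂₁ : Matrix (Fin (2*d) ⊕ Fin (2*d)) (Fin d ⊕ Fin d) ℝ)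
      (L₂₂ : Matrix (Fin (2*d) ⊕ Fin (2*d)) (Fin (2*d) ⊕ Fin (2*d)) ℝ),
      (fromBlocks X L₁₂ L₂₁ L₂₂)ᵀ * fromBlocks (stdJ d) 0 0 (stdJ (2*d))
        * fromBlocks X L₁₂ L₂₁ L₂₂ = fromBlocks (stdJ d) 0 0 (stdJ (2*d)) ∧
      L₂₁ᵀ * L₂₁ = Y := by
  obtain ⟨C, hCC, hCJC⟩ := exists_C d Y (stdJ d - Xᵀ * stdJ d * X) h
  set Ω : Matrix ((Fin d ⊕ Fin d) ⊕ (Fin (2*d) ⊕ Fin (2*d)))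
      ((Fin d ⊕ Fin d) ⊕ (Fin (2*d) ⊕ Fin (2*d))) ℝ
    := fromBlocks (stdJ d) 0 0 (stdJ (2*d)) with hΩ
  have hΩt : Ωᵀ = -Ω := by
    rw [hΩ, Matrix.fromBlocks_transpose, Matrix.fromBlocks_neg]
    congr 1 <;> simp [stdJ_transpose]
  set K := fromRows X C with hK
  have hKK : Kᵀ * Ω * K = stdJ d := by
    rw [hK, hΩ, Matrix.transpose_fromRows, Matrix.fromCols_mul_fromBlocks,
      Matrix.fromCols_mul_fromRows]
    simp only [Matrix.mul_zero, Matrix.zero_mul, add_zero, zero_add]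
    rw [hCJC]
    abel
  obtain ⟨N, hN1, hN2⟩ := complete d (2*d) K hKK
  rw [← hΩ] at hN1 hN2
  have hNK : Nᵀ * Ω * K = 0 := by
    have h1 : (Kᵀ * Ω * N)ᵀ = Nᵀ * Ωᵀ * K := by
      rw [Matrix.transpose_mul, Matrix.transpose_mul, Matrix.transpose_transpose,
        Matrix.mul_assoc]
    rw [hN1, hΩt] at h1
    simp only [Matrix.mul_neg, Matrix.neg_mul, Matrix.transpose_zero] at h1
    exact neg_eq_zero.mp h1.symm
  refine ⟨N.toRows₁, C, N.toRows₂, ?_, hCC⟩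
  have hL : fromBlocks X N.toRows₁ C N.toRows₂ = fromCols K N := by
    rw [← Matrix.fromCols_fromRows_eq_fromBlocks, ← hK, Matrix.fromRows_toRows]
  rw [hL, Matrix.transpose_fromCols, Matrix.fromRows_mul,
    Matrix.fromRows_mul_fromCols, hKK, hN1, hN2, hNK, hΩ]

lemma dil0 (Xz Yz : Matrix (Fin 0 ⊕ Fin 0) (Fin 0 ⊕ Fin 0) ℝ) :
    (Matrix.fromBlocks Xz 0 0 (1 : Matrix (Fin 1 ⊕ Fin 1) (Fin 1 ⊕ Fin 1) ℝ))ᵀ *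
      Matrix.fromBlocks (stdJ 0) 0 0 (stdJ 1) *
      Matrix.fromBlocks Xz 0 0 (1 : Matrix (Fin 1 ⊕ Fin 1) (Fin 1 ⊕ Fin 1) ℝ) = Matrix.fromBlocks (stdJ 0) 0 0 (stdJ 1) ∧
    (0 : Matrix (Fin 1 ⊕ Fin 1) (Fin 0 ⊕ Fin 0) ℝ)ᵀ * (0 : Matrix (Fin 1 ⊕ Fin 1) (Fin 0 ⊕ Fin 0) ℝ) = Yz := by
  constructor
  · rw [Matrix.fromBlocks_transpose, Matrix.fromBlocks_multiply, Matrix.fromBlocks_multiply,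
      Matrix.fromBlocks_inj]
    refine ⟨?_, ?_, ?_, ?_⟩
    · ext i j; rcases i with a | a <;> exact a.elim0
    · ext i j; rcases i with a | a <;> exact a.elim0
    · ext i j; rcases j with a | a <;> exact a.elim0
    · simp
  · ext i j; rcases i with a | a <;> exact a.elim0

theorem stmt_13 (d : ℕ) (X Y : Matrix (Fin d ⊕ Fin d) (Fin d ⊕ Fin d) ℝ) (hY : Yᵀ = Y) :
    let J : Matrix (Fin d ⊕ Fin d) (Fin d ⊕ Fin d) ℝ := Matrix.fromBlocks 0 1 (-1) 0
    let dil : ℕ → Prop := fun d' =>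
      ∃ (L₁₂ : Matrix (Fin d ⊕ Fin d) (Fin d' ⊕ Fin d') ℝ)
        (L₂₁ : Matrix (Fin d' ⊕ Fin d') (Fin d ⊕ Fin d) ℝ)
        (L₂₂ : Matrix (Fin d' ⊕ Fin d') (Fin d' ⊕ Fin d') ℝ),
        (Matrix.fromBlocks X L₁₂ L₂₁ L₂₂)ᵀ *
            Matrix.fromBlocks J 0 0
              (Matrix.fromBlocks 0 1 (-1) 0 : Matrix (Fin d' ⊕ Fin d') (Fin d' ⊕ Fin d') ℝ) *
            Matrix.fromBlocks X L₁₂ L₂₁ L₂₂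
          = Matrix.fromBlocks J 0 0
              (Matrix.fromBlocks 0 1 (-1) 0 : Matrix (Fin d' ⊕ Fin d') (Fin d' ⊕ Fin d') ℝ) ∧
        L₂₁ᵀ * L₂₁ = Y
    ((∃ d' : ℕ, 1 ≤ d' ∧ dil d') ↔
      (Y.map Complex.ofReal + Complex.I • ((J - Xᵀ * J * X).map Complex.ofReal)).PosSemidef) ∧
    ((Y.map Complex.ofReal + Complex.I • ((J - Xᵀ * J * X).map Complex.ofReal)).PosSemidef ↔
      (Y.map Complex.ofReal - Complex.I • ((J - Xᵀ * J * X).map Complex.ofReal)).PosSemidef) ∧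
    ((Y.map Complex.ofReal + Complex.I • ((J - Xᵀ * J * X).map Complex.ofReal)).PosSemidef →
      Y.PosSemidef ∧ dil (2 * d)) := by
  intro J dil
  refine ⟨⟨?_, ?_⟩, ?_, ?_⟩
  · rintro ⟨d', -, L₁₂, L₂₁, L₂₂, heq, hYe⟩
    exact dil_to_pos d d' X Y L₁₂ L₂₁ L₂₂ heq hYe
  · intro h
    rcases Nat.eq_zero_or_pos d with hd | hd
    · subst hd
      obtain ⟨h1, h2⟩ := dil0 X Y
      exact ⟨1, le_refl 1, 0, 0, 1, h1, h2⟩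
    · obtain ⟨L₁₂, L₂₁, L₂₂, heq, hYe⟩ := pos_to_dil d X Y h
      exact ⟨2 * d, by omega, L₁₂, L₂₁, L₂₂, heq, hYe⟩
  · exact pos_iff_neg_pos Y (J - Xᵀ * J * X) hY (skewA d X)
  · intro h
    obtain ⟨L₁₂, L₂₁, L₂₂, heq, hYe⟩ := pos_to_dil d X Y h
    exact ⟨real_pos Y (J - Xᵀ * J * X) hY (skewA d X) h, L₁₂, L₂₁, L₂₂, heq, hYe⟩

end StmtAux
end

section
/- Let X, Y ∈ M_d(ℝ) with Y positive semidefinite. There exists an orthosymplectic matrix L = [[X, B], [-B, X]] ∈ M_{2d}(ℝ) with B^T B = Y if and only if X^T X + Y = I and X^T Q √Y is symmetric for some orthogonal matrix Q ∈ M_d(ℝ). -/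
open Matrix

noncomputable def Matrix.PosSemidef.sqrt {n : Type*} [Fintype n] [DecidableEq n] {A : Matrix n n ℝ}
    (hA : A.PosSemidef) : Matrix n n ℝ :=
  hA.1.eigenvectorUnitary.1 * diagonal ((↑) ∘ (√·) ∘ hA.1.eigenvalues) *
    (star hA.1.eigenvectorUnitary : Matrix n n ℝ)

private lemma toEuclideanLin_mul_apply (d : ℕ) (M N : Matrix (Fin d) (Fin d) ℝ)
    (x : EuclideanSpace ℝ (Fin d)) :
    Matrix.toEuclideanLin (M * N) x = Matrix.toEuclideanLin M (Matrix.toEuclideanLin N x) := by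
  simp [Matrix.toEuclideanLin_apply, Matrix.mulVec_mulVec]

private lemma polar_exists (d : ℕ) (B P : Matrix (Fin d) (Fin d) ℝ) (hPt : Pᵀ = P)
    (hsq : P * P = Bᵀ * B) :
    ∃ Q : Matrix (Fin d) (Fin d) ℝ, Qᵀ * Q = 1 ∧ B = Q * P := by
  classical
  set V := EuclideanSpace ℝ (Fin d) with hV
  let p : V →ₗ[ℝ] V := Matrix.toEuclideanLin P
  let b : V →ₗ[ℝ] V := Matrix.toEuclideanLin B
  have key : ∀ (M : Matrix (Fin d) (Fin d) ℝ) (v : Fin d → ℝ),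
      (M *ᵥ v) ⬝ᵥ (M *ᵥ v) = v ⬝ᵥ ((Mᵀ * M) *ᵥ v) := by
    intro M v
    rw [Matrix.dotProduct_mulVec v, ← Matrix.vecMul_vecMul, Matrix.vecMul_transpose,
      Matrix.dotProduct_mulVec]
  have h1 : ∀ (M : Matrix (Fin d) (Fin d) ℝ) (x : V),
      (inner ℝ (Matrix.toEuclideanLin M x) (Matrix.toEuclideanLin M x) : ℝ)
        = (WithLp.equiv 2 _ x) ⬝ᵥ ((Mᵀ * M) *ᵥ (WithLp.equiv 2 _ x)) := by
    intro M x
    simp only [Matrix.toEuclideanLin_apply, PiLp.inner_apply, RCLike.inner_apply,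
      conj_trivial, PiLp.toLp_apply, WithLp.equiv_apply]
    exact key M _
  have hinner : ∀ x : V, (inner ℝ (p x) (p x) : ℝ) = inner ℝ (b x) (b x) := by
    intro x
    rw [h1 P x, h1 B x, show Pᵀ * P = Bᵀ * B by rw [hPt, hsq]]
  have hnorm : ∀ x : V, ‖b x‖ = ‖p x‖ := by
    intro x
    rw [← Real.sqrt_sq (norm_nonneg (b x)), ← Real.sqrt_sq (norm_nonneg (p x)),
      ← real_inner_self_eq_norm_sq, ← real_inner_self_eq_norm_sq, hinner x]
  have hker : LinearMap.ker p ≤ LinearMap.ker b := by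
    intro x hx
    rw [LinearMap.mem_ker] at hx ⊢
    have := hnorm x
    rw [hx, norm_zero] at this
    exact norm_eq_zero.mp this
  let g : (V ⧸ LinearMap.ker p) →ₗ[ℝ] V := (LinearMap.ker p).liftQ b hker
  let L : ↥(LinearMap.range p) →ₗᵢ[ℝ] V :=
    { toLinearMap := g.comp (p.quotKerEquivRange.symm : (LinearMap.range p) →ₗ[ℝ] _),
      norm_map' := by
        rintro ⟨-, x, rfl⟩
        have h2 : p.quotKerEquivRange.symm ⟨p x, LinearMap.mem_range_self p x⟩
            = (LinearMap.ker p).mkQ x := p.quotKerEquivRange_symm_apply_image x _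
        simp only [LinearMap.coe_comp, LinearEquiv.coe_coe, Function.comp_apply, h2]
        rw [Submodule.mkQ_apply, Submodule.liftQ_apply]
        rw [hnorm x]
        rfl }
  have hLapp : ∀ x : V, ∀ h, L ⟨p x, h⟩ = b x := by
    intro x h
    show g (p.quotKerEquivRange.symm ⟨p x, h⟩) = b x
    rw [p.quotKerEquivRange_symm_apply_image x]
    rw [Submodule.mkQ_apply, Submodule.liftQ_apply]
  let Qiso : V →ₗᵢ[ℝ] V := L.extend
  have hQp : ∀ x : V, Qiso (p x) = b x := by
    intro x
    have : p x = ((⟨p x, LinearMap.mem_range_self p x⟩ : LinearMap.range p) : V) := rfl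
    rw [this, L.extend_apply, hLapp]
  let Q : Matrix (Fin d) (Fin d) ℝ := Matrix.toEuclideanLin.symm Qiso.toLinearMap
  have hQ : Matrix.toEuclideanLin Q = Qiso.toLinearMap := Matrix.toEuclideanLin.apply_symm_apply _
  refine ⟨Q, ?_, ?_⟩
  · ext i j
    have h3 := Qiso.inner_map_map (EuclideanSpace.single i (1:ℝ)) (EuclideanSpace.single j (1:ℝ))
    have h4 : ∀ k : Fin d, Qiso (EuclideanSpace.single k (1:ℝ))
        = (WithLp.equiv 2 (Fin d → ℝ)).symm (fun r => Q r k) := by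
      intro k
      rw [show Qiso (EuclideanSpace.single k (1:ℝ))
          = Matrix.toEuclideanLin Q (EuclideanSpace.single k 1) from by rw [hQ]; rfl]
      rw [Matrix.toEuclideanLin_apply, PiLp.ofLp_single, Matrix.mulVec_single]
      simp only [MulOpposite.op_one, one_smul]
      rfl
    rw [h4 i, h4 j] at h3
    have hL : (inner ℝ ((WithLp.equiv 2 (Fin d → ℝ)).symm fun r => Q r i)
        ((WithLp.equiv 2 (Fin d → ℝ)).symm fun r => Q r j) : ℝ) = ∑ k, Q k i * Q k j := by
      simp [PiLp.inner_apply, RCLike.inner_apply, WithLp.equiv_symm_apply]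
      exact Finset.sum_congr rfl fun k _ => mul_comm _ _
    have hR : (inner ℝ (EuclideanSpace.single i (1:ℝ)) (EuclideanSpace.single j (1:ℝ)) : ℝ)
        = if i = j then 1 else 0 := by
      simp [EuclideanSpace.inner_single_left, EuclideanSpace.single_apply, eq_comm]
    rw [hL, hR] at h3
    simpa [Matrix.mul_apply, Matrix.one_apply, Matrix.transpose_apply] using h3
  · apply Matrix.toEuclideanLin.injective
    refine LinearMap.ext fun x => ?_
    rw [toEuclideanLin_mul_apply d Q P x, hQ]
    exact (hQp x).symm

theorem stmt_16 (d : ℕ) (X Y : Matrix (Fin d) (Fin d) ℝ) (hY : Y.PosSemidef) :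
    let J : Matrix (Fin d ⊕ Fin d) (Fin d ⊕ Fin d) ℝ := Matrix.fromBlocks 0 1 (-1) 0
    (∃ B : Matrix (Fin d) (Fin d) ℝ,
        (Matrix.fromBlocks X B (-B) X)ᵀ * Matrix.fromBlocks X B (-B) X = 1 ∧
        (Matrix.fromBlocks X B (-B) X)ᵀ * J * Matrix.fromBlocks X B (-B) X = J ∧
        Bᵀ * B = Y) ↔
      (Xᵀ * X + Y = 1 ∧
        ∃ Q : Matrix (Fin d) (Fin d) ℝ, Qᵀ * Q = 1 ∧
          (Xᵀ * Q * hY.sqrt)ᵀ = Xᵀ * Q * hY.sqrt) := by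
  intro J
  have hU : (star hY.1.eigenvectorUnitary : Matrix (Fin d) (Fin d) ℝ)
      = (hY.1.eigenvectorUnitary : Matrix (Fin d) (Fin d) ℝ)ᵀ := by
    rw [Matrix.star_eq_conjTranspose]; exact Matrix.conjTranspose_eq_transpose_of_trivial _
  have hsqrtH : hY.sqrtᵀ = hY.sqrt := by
    simp only [Matrix.PosSemidef.sqrt, hU, Matrix.transpose_mul, Matrix.transpose_transpose,
      Matrix.diagonal_transpose, Matrix.mul_assoc]
  have hsqrtsq : hY.sqrt * hY.sqrt = Y := by
    have hUU : (star hY.1.eigenvectorUnitary : Matrix (Fin d) (Fin d) ℝ)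
        * hY.1.eigenvectorUnitary = 1 := Unitary.coe_star_mul_self _
    conv_rhs => rw [hY.1.spectral_theorem, Unitary.conjStarAlgAut_apply]
    simp only [Matrix.PosSemidef.sqrt, Matrix.mul_assoc]
    rw [← Matrix.mul_assoc (star hY.1.eigenvectorUnitary : Matrix (Fin d) (Fin d) ℝ), hUU,
      Matrix.one_mul, ← Matrix.mul_assoc (diagonal _), diagonal_mul_diagonal]
    congr 3
    ext i
    simp [Real.mul_self_sqrt (hY.eigenvalues_nonneg i)]
  constructor
  · rintro ⟨B, h1, h2, h3⟩
    rw [Matrix.fromBlocks_transpose, Matrix.fromBlocks_multiply, ← Matrix.fromBlocks_one,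
      Matrix.fromBlocks_inj] at h1
    obtain ⟨h11, h12, h13, h14⟩ := h1
    have hXX : Xᵀ * X + Y = 1 := by
      rw [← h3]
      simpa using h11
    refine ⟨hXX, ?_⟩
    obtain ⟨Q, hQ, hQP⟩ := polar_exists d B hY.sqrt hsqrtH (by rw [hsqrtsq, h3])
    refine ⟨Q, hQ, ?_⟩
    have hXB : Xᵀ * B = Bᵀ * X := by
      rw [Matrix.transpose_neg, Matrix.neg_mul, ← sub_eq_add_neg] at h12
      exact sub_eq_zero.mp h12
    have hBQ : Xᵀ * Q * hY.sqrt = Xᵀ * B := by rw [Matrix.mul_assoc, ← hQP]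
    rw [hBQ, hXB, Matrix.transpose_mul, Matrix.transpose_transpose, ← hXB, hXB]
  · rintro ⟨hXX, Q, hQ, hsym⟩
    set B := Q * hY.sqrt with hB
    have hBB : Bᵀ * B = Y := by
      rw [hB, Matrix.transpose_mul, Matrix.mul_assoc, ← Matrix.mul_assoc Qᵀ, hQ,
        Matrix.one_mul, hsqrtH, hsqrtsq]
    have hXQ : Xᵀ * B = Xᵀ * Q * hY.sqrt := by rw [hB, Matrix.mul_assoc]
    have hXB : Xᵀ * B = Bᵀ * X := by
      rw [hXQ, ← hsym, hB]
      rw [Matrix.transpose_mul, Matrix.transpose_mul, Matrix.transpose_mul,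
        Matrix.transpose_transpose, Matrix.mul_assoc]
    have key1 : Bᵀ * B + Xᵀ * X = 1 := by rw [hBB, add_comm]; exact hXX
    have key2 : Xᵀ * X + Bᵀ * B = 1 := by rw [hBB]; exact hXX
    refine ⟨B, ?_, ?_, hBB⟩
    · rw [Matrix.fromBlocks_transpose, Matrix.fromBlocks_multiply, ← Matrix.fromBlocks_one,
        Matrix.fromBlocks_inj]
      refine ⟨?_, ?_, ?_, ?_⟩
      · simpa using key2
      · simp [hXB]
      · simp [hXB]
      · simpa using key1
    · show (Matrix.fromBlocks X B (-B) X)ᵀ * Matrix.fromBlocks 0 1 (-1) 0 *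
        Matrix.fromBlocks X B (-B) X = Matrix.fromBlocks 0 1 (-1) 0
      rw [Matrix.fromBlocks_transpose, Matrix.fromBlocks_multiply, Matrix.fromBlocks_multiply,
        Matrix.fromBlocks_inj]
      refine ⟨?_, ?_, ?_, ?_⟩
      · simp [Matrix.mul_neg, Matrix.neg_mul, hXB]
      · simpa [Matrix.mul_neg, Matrix.neg_mul] using key1
      · simp only [Matrix.mul_zero, Matrix.mul_one, Matrix.mul_neg, Matrix.neg_mul,
          add_zero, zero_add]
        rw [← neg_add, key2]
      · simp [Matrix.mul_neg, Matrix.neg_mul, hXB]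
end

section
/- Let X = [[0, I_d], [I_d, 0]] and Y = I_{2d} in M_{2d}(ℝ). Then: (a) for every symmetric S ∈ M_{2d}(ℝ) with S + iJ_{2d} ≥ 0, the matrix X^T S X + Y satisfies (X^T S X + Y) + iJ_{2d} ≥ 0; but (b) Y + i(J_{2d} - X^T J_{2d} X) is not positive semidefinite. -/
open Matrix
open scoped ComplexOrder

section Aux

variable {n : Type*} [Fintype n] [DecidableEq n]

private noncomputable def mc (M : Matrix n n ℝ) : Matrix n n ℂ := M.map Complex.ofReal

private lemma mc_mul (A B : Matrix n n ℝ) : mc (A * B) = mc A * mc B := by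
  exact Matrix.map_mul (L := A) (M := B) (f := Complex.ofRealHom)

private lemma mc_add (A B : Matrix n n ℝ) : mc (A + B) = mc A + mc B := by
  ext i j; simp [mc]

private lemma mc_neg (A : Matrix n n ℝ) : mc (-A) = -mc A := by
  ext i j; simp [mc]

private lemma mc_one : mc (1 : Matrix n n ℝ) = 1 := by
  ext i j
  by_cases h : i = j <;> simp [mc, Matrix.one_apply, h]

private lemma mc_transpose (A : Matrix n n ℝ) : mc Aᵀ = (mc A)ᵀ := by
  ext i j; simp [mc]

private lemma mc_conjTranspose (A : Matrix n n ℝ) : (mc A)ᴴ = mc Aᵀ := by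
  ext i j; simp [mc, conjTranspose_apply]

end Aux

theorem stmt_17 (d : ℕ) (hd : 0 < d) :
    let J : Matrix (Fin d ⊕ Fin d) (Fin d ⊕ Fin d) ℝ := Matrix.fromBlocks 0 1 (-1) 0
    let X : Matrix (Fin d ⊕ Fin d) (Fin d ⊕ Fin d) ℝ := Matrix.fromBlocks 0 1 1 0
    let Y : Matrix (Fin d ⊕ Fin d) (Fin d ⊕ Fin d) ℝ := 1
    (∀ S : Matrix (Fin d ⊕ Fin d) (Fin d ⊕ Fin d) ℝ, Sᵀ = S →
      (S.map Complex.ofReal + Complex.I • (J.map Complex.ofReal)).PosSemidef →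
      ((Xᵀ * S * X + Y).map Complex.ofReal + Complex.I • (J.map Complex.ofReal)).PosSemidef) ∧
    ¬ (Y.map Complex.ofReal + Complex.I • ((J - Xᵀ * J * X).map Complex.ofReal)).PosSemidef := by
  intro J X Y
  have hJt : Jᵀ = -J := by
    simp [J, Matrix.fromBlocks_transpose, Matrix.fromBlocks_neg]
  have hXt : Xᵀ = X := by
    simp [X, Matrix.fromBlocks_transpose]
  have hXJX : Xᵀ * J * X = -J := by
    rw [hXt]
    simp [J, X, Matrix.fromBlocks_multiply, Matrix.fromBlocks_neg]
  constructor
  · intro S hS hpos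
    have h2 : ((mc S + Complex.I • mc J)ᵀ).PosSemidef := hpos.transpose
    have h3 := h2.conjTranspose_mul_mul_same (mc X)
    have h4 := h3.add Matrix.PosDef.one.posSemidef
    have key : (mc X)ᴴ * (mc S + Complex.I • mc J)ᵀ * mc X + 1
        = mc (Xᵀ * S * X + Y) + Complex.I • mc J := by
      have ht : (mc S + Complex.I • mc J)ᵀ = mc S - Complex.I • mc J := by
        rw [Matrix.transpose_add, Matrix.transpose_smul, ← mc_transpose, ← mc_transpose,
          hS, hJt, mc_neg]
        module
      rw [mc_conjTranspose, ht]
      have expand : mc Xᵀ * (mc S - Complex.I • mc J) * mc X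
          = mc (Xᵀ * S * X) - Complex.I • mc (Xᵀ * J * X) := by
        rw [mc_mul, mc_mul, mc_mul, mc_mul, mc_transpose]
        rw [Matrix.mul_sub, Matrix.sub_mul, Matrix.mul_smul, Matrix.smul_mul]
      rw [expand, hXJX, mc_neg, mc_add]
      have : mc Y = (1 : Matrix (Fin d ⊕ Fin d) (Fin d ⊕ Fin d) ℂ) := mc_one
      rw [this]
      simp [smul_neg]
      abel
    rw [show ((Xᵀ * S * X + Y).map Complex.ofReal + Complex.I • (J.map Complex.ofReal))
        = mc (Xᵀ * S * X + Y) + Complex.I • mc J from rfl, ← key]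
    exact h4
  · intro h
    have h2J : J - Xᵀ * J * X = J + J := by rw [hXJX]; abel
    set i0 : Fin d ⊕ Fin d := Sum.inl ⟨0, hd⟩ with hi0
    set i1 : Fin d ⊕ Fin d := Sum.inr ⟨0, hd⟩ with hi1
    set M : Matrix (Fin d ⊕ Fin d) (Fin d ⊕ Fin d) ℂ :=
      Y.map Complex.ofReal + Complex.I • ((J - Xᵀ * J * X).map Complex.ofReal) with hM
    set z : (Fin d ⊕ Fin d) → ℂ := Pi.single i0 1 + Pi.single i1 Complex.I with hz
    have hle := h.dotProduct_mulVec_nonneg z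
    have hM00 : M i0 i0 = 1 := by simp [hM, h2J, Y, J, Matrix.one_apply, i0]
    have hM01 : M i0 i1 = 2 * Complex.I := by
      simp [hM, h2J, Y, J, Matrix.one_apply, i0, i1]; ring
    have hM10 : M i1 i0 = -(2 * Complex.I) := by
      simp [hM, h2J, Y, J, Matrix.one_apply, i0, i1]; ring
    have hM11 : M i1 i1 = 1 := by simp [hM, h2J, Y, J, Matrix.one_apply, i1]
    have hval : star z ⬝ᵥ (M *ᵥ z) = -2 := by
      have hz' : star z = Pi.single i0 1 + Pi.single i1 (-Complex.I) := by
        ext p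
        rcases eq_or_ne p i0 with rfl | h0
        · simp [hz, i0, i1, Pi.single_apply]
        · rcases eq_or_ne p i1 with rfl | h1
          · simp [hz, i0, i1, Pi.single_apply]
          · simp [hz, Pi.single_apply, h0, h1]
      rw [hz, hz', Matrix.mulVec_add, Matrix.mulVec_single, Matrix.mulVec_single]
      simp only [add_dotProduct, single_dotProduct, Pi.add_apply, Pi.smul_apply,
        Matrix.col_apply, op_smul_eq_mul]
      rw [hM00, hM01, hM10, hM11]
      simp [Complex.ext_iff]
      norm_num
    rw [hval] at hle
    rw [Complex.le_def] at hle
    norm_num at hle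
end
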